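/- Vanishing tangential variation: for a strictly convex compact set M and nonzero p, lim_{γ→0} ⟨p, (s_M(p + γq) − s_M(p))/γ⟩ = 0 for any direction q. -/

import Mathlib

open RealInnerProductSpace

/-- Continuity of the contact function along the line `γ ↦ p + γ • q` at `γ = 0`. -/
theorem aux_tendsto_sM {n : ℕ} (M : Set (EuclideanSpace ℝ (Fin n)))
    (hMc : IsCompact M)
    (sM : EuclideanSpace ℝ (Fin n) → EuclideanSpace ℝ (Fin n))
    (hsM : ∀ p : EuclideanSpace ℝ (Fin n), p ≠ 0 →
      sM p ∈ M ∧ IsMaxOn (fun s => ⟪p, s⟫) M (sM p))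
    (huniq : ∀ p : EuclideanSpace ℝ (Fin n), p ≠ 0 →
      ∀ s ∈ M, IsMaxOn (fun x => ⟪p, x⟫) M s → s = sM p)
    (p : EuclideanSpace ℝ (Fin n)) (hp : p ≠ 0)
    (q : EuclideanSpace ℝ (Fin n)) :
    Filter.Tendsto (fun γ : ℝ => sM (p + γ • q)) (nhdsWithin 0 {(0:ℝ)}ᶜ)
      (nhds (sM p)) := by
  obtain ⟨C, hC⟩ := hMc.isBounded.exists_norm_le
  have hC0 : (0:ℝ) ≤ C := le_trans (norm_nonneg _) (hC _ (hsM p hp).1)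
  set δ₁ : ℝ := ‖p‖ / (‖q‖ + 1) with hδ₁def
  have hq1 : (0:ℝ) < ‖q‖ + 1 := by positivity
  have hδ₁ : 0 < δ₁ := div_pos (norm_pos_iff.mpr hp) hq1
  have hne : ∀ γ : ℝ, |γ| < δ₁ → p + γ • q ≠ 0 := by
    intro γ hγ h
    have h1 : p = -(γ • q) := eq_neg_of_add_eq_zero_left h
    have h2 : ‖p‖ = |γ| * ‖q‖ := by
      rw [h1, norm_neg, norm_smul, Real.norm_eq_abs]
    have h3 : |γ| * ‖q‖ < ‖p‖ := by
      calc |γ| * ‖q‖ ≤ |γ| * (‖q‖ + 1) := by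
              exact mul_le_mul_of_nonneg_left (by linarith) (abs_nonneg γ)
        _ < δ₁ * (‖q‖ + 1) := by
              exact mul_lt_mul_of_pos_right hγ hq1
        _ = ‖p‖ := by
              rw [hδ₁def]; field_simp
    linarith [h2 ▸ h3]
  -- inner products on M are bounded
  have hip : ∀ x ∈ M, |⟪q, x⟫| ≤ ‖q‖ * C := by
    intro x hx
    calc |⟪q, x⟫| ≤ ‖q‖ * ‖x‖ := abs_real_inner_le_norm q x
      _ ≤ ‖q‖ * C := mul_le_mul_of_nonneg_left (hC x hx) (norm_nonneg q)
  rw [Metric.tendsto_nhdsWithin_nhds]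
  intro ε hε
  set K : Set (EuclideanSpace ℝ (Fin n)) := M ∩ {x | ε ≤ dist x (sM p)} with hKdef
  have hclosed : IsClosed {x : EuclideanSpace ℝ (Fin n) | ε ≤ dist x (sM p)} :=
    isClosed_Ici.preimage (Continuous.dist continuous_id continuous_const)
  have hKc : IsCompact K := hMc.inter_right hclosed
  by_cases hKne : K.Nonempty
  · have hfc : Continuous fun x : EuclideanSpace ℝ (Fin n) => (⟪p, x⟫ : ℝ) :=
      continuous_const.inner continuous_id
    obtain ⟨x0, hx0K, hx0max⟩ := hKc.exists_isMaxOn hKne hfc.continuousOn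
    set m : ℝ := ⟪p, sM p⟫ with hmdef
    set δ' : ℝ := m - ⟪p, x0⟫ with hδ'def
    have hδ'pos : 0 < δ' := by
      have hle : (⟪p, x0⟫ : ℝ) ≤ m := (hsM p hp).2 hx0K.1
      rcases lt_or_eq_of_le hle with h | h
      · simpa [hδ'def] using h
      · exfalso
        have hx0max' : IsMaxOn (fun x => ⟪p, x⟫) M x0 := by
          intro s hs
          have := (hsM p hp).2 hs
          simp only [Set.mem_setOf_eq] at this ⊢
          linarith [hmdef.le, hmdef.ge]
        have := huniq p hp x0 hx0K.1 hx0max'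
        have hd : ε ≤ dist x0 (sM p) := hx0K.2
        rw [this] at hd
        simp at hd
        linarith
    refine ⟨min δ₁ (δ' / (2 * (‖q‖ * C + 1))), lt_min hδ₁ (by positivity), ?_⟩
    intro γ hγmem hγd
    simp only [Real.dist_eq, sub_zero] at hγd
    have hγ1 : |γ| < δ₁ := lt_of_lt_of_le hγd (min_le_left _ _)
    have hγ2 : |γ| < δ' / (2 * (‖q‖ * C + 1)) := lt_of_lt_of_le hγd (min_le_right _ _)
    have hp' : p + γ • q ≠ 0 := hne γ hγ1
    set g := sM (p + γ • q) with hgdef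
    have hgM : g ∈ M := (hsM _ hp').1
    by_contra hcon
    push_neg at hcon
    have hgK : g ∈ K := ⟨hgM, hcon⟩
    -- g is suboptimal for p
    have h1 : ⟪p, g⟫ ≤ m - δ' := by
      have := hx0max hgK
      simp only [Set.mem_setOf_eq] at this
      linarith
    -- maximality of g for p + γ • q, applied to sM p ∈ M
    have h2 : ⟪p + γ • q, sM p⟫ ≤ ⟪p + γ • q, g⟫ := (hsM _ hp').2 (hsM p hp).1
    rw [inner_add_left, inner_add_left, real_inner_smul_left, real_inner_smul_left] at h2
    have hb1 : |⟪q, sM p⟫| ≤ ‖q‖ * C := hip _ (hsM p hp).1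
    have hb2 : |⟪q, g⟫| ≤ ‖q‖ * C := hip _ hgM
    have habs1 : γ * ⟪q, sM p⟫ ≥ -(|γ| * (‖q‖ * C)) := by
      have := abs_mul γ ⟪q, sM p⟫ ▸ neg_abs_le (γ * ⟪q, sM p⟫)
      nlinarith [neg_abs_le (γ * ⟪q, sM p⟫), abs_mul γ ⟪q, sM p⟫, abs_nonneg γ,
        mul_le_mul_of_nonneg_left hb1 (abs_nonneg γ)]
    have habs2 : γ * ⟪q, g⟫ ≤ |γ| * (‖q‖ * C) := by
      nlinarith [le_abs_self (γ * ⟪q, g⟫), abs_mul γ ⟪q, g⟫, abs_nonneg γ,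
        mul_le_mul_of_nonneg_left hb2 (abs_nonneg γ)]
    have key : δ' ≤ 2 * (|γ| * (‖q‖ * C)) := by
      have : m + γ * ⟪q, sM p⟫ ≤ ⟪p, g⟫ + γ * ⟪q, g⟫ := h2
      nlinarith
    have : |γ| * (2 * (‖q‖ * C + 1)) < δ' := by
      have := (lt_div_iff₀ (by positivity : (0:ℝ) < 2 * (‖q‖ * C + 1))).mp hγ2
      linarith [this]
    nlinarith [abs_nonneg γ]
  · -- K empty: every point of M is within ε of sM p
    refine ⟨δ₁, hδ₁, ?_⟩
    intro γ hγmem hγd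
    simp only [Real.dist_eq, sub_zero] at hγd
    have hp' : p + γ • q ≠ 0 := hne γ hγd
    have hgM : sM (p + γ • q) ∈ M := (hsM _ hp').1
    by_contra hcon
    push_neg at hcon
    exact hKne ⟨_, hgM, hcon⟩

/-- Vanishing tangential variation: for a strictly convex compact set `M` and nonzero `p`,
`⟪p, (s_M(p + γq) - s_M(p))/γ⟫ → 0` as `γ → 0`, for any direction `q`. -/
theorem tangential_variation_vanishes {n : ℕ} (M : Set (EuclideanSpace ℝ (Fin n)))
    (hMc : IsCompact M) (hMs : StrictConvex ℝ M)
    (sM : EuclideanSpace ℝ (Fin n) → EuclideanSpace ℝ (Fin n))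
    (hsM : ∀ p : EuclideanSpace ℝ (Fin n), p ≠ 0 →
      sM p ∈ M ∧ IsMaxOn (fun s => ⟪p, s⟫) M (sM p))
    (huniq : ∀ p : EuclideanSpace ℝ (Fin n), p ≠ 0 →
      ∀ s ∈ M, IsMaxOn (fun x => ⟪p, x⟫) M s → s = sM p)
    (p : EuclideanSpace ℝ (Fin n)) (hp : p ≠ 0)
    (q : EuclideanSpace ℝ (Fin n)) :
    Filter.Tendsto (fun γ : ℝ => ⟪p, γ⁻¹ • (sM (p + γ • q) - sM p)⟫)
      (nhdsWithin 0 {(0:ℝ)}ᶜ) (nhds 0) := by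
  have hcont := aux_tendsto_sM M hMc sM hsM huniq p hp q
  have hbound : Filter.Tendsto (fun γ : ℝ => ‖q‖ * ‖sM (p + γ • q) - sM p‖)
      (nhdsWithin 0 {(0:ℝ)}ᶜ) (nhds 0) := by
    have h1 : Filter.Tendsto (fun γ : ℝ => sM (p + γ • q) - sM p)
        (nhdsWithin 0 {(0:ℝ)}ᶜ) (nhds (sM p - sM p)) :=
      hcont.sub tendsto_const_nhds
    have h2 := (h1.norm).const_mul ‖q‖
    simpa using h2
  apply squeeze_zero_norm' _ hbound
  -- eventual bound
  have hδ₁ : (0:ℝ) < ‖p‖ / (‖q‖ + 1) := div_pos (norm_pos_iff.mpr hp) (by positivity)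
  have hev : ∀ᶠ γ : ℝ in nhdsWithin 0 {(0:ℝ)}ᶜ, |γ - 0| < ‖p‖ / (‖q‖ + 1) :=
    Filter.Eventually.filter_mono nhdsWithin_le_nhds (eventually_abs_sub_lt 0 hδ₁)
  filter_upwards [hev, self_mem_nhdsWithin] with γ hγ1 hγ0
  simp only [sub_zero] at hγ1
  simp only [Set.mem_compl_iff, Set.mem_singleton_iff] at hγ0
  have hγabs : 0 < |γ| := abs_pos.mpr hγ0
  -- p + γ • q ≠ 0
  have hp' : p + γ • q ≠ 0 := by
    intro h
    have h1 : p = -(γ • q) := eq_neg_of_add_eq_zero_left h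
    have h2 : ‖p‖ = |γ| * ‖q‖ := by rw [h1, norm_neg, norm_smul, Real.norm_eq_abs]
    have hq1 : (0:ℝ) < ‖q‖ + 1 := by positivity
    have h3 : |γ| * ‖q‖ < ‖p‖ := by
      calc |γ| * ‖q‖ ≤ |γ| * (‖q‖ + 1) :=
            mul_le_mul_of_nonneg_left (by linarith) (abs_nonneg γ)
        _ < (‖p‖ / (‖q‖ + 1)) * (‖q‖ + 1) := mul_lt_mul_of_pos_right hγ1 hq1
        _ = ‖p‖ := by field_simp
    linarith [h2 ▸ h3]
  set g := sM (p + γ • q) with hgdef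
  have hgM : g ∈ M := (hsM _ hp').1
  -- first inequality : ⟪p, g - sM p⟫ ≤ 0
  have h1 : ⟪p, g - sM p⟫ ≤ 0 := by
    have := (hsM p hp).2 hgM
    simp only [Set.mem_setOf_eq] at this
    rw [inner_sub_right]
    linarith
  -- second inequality : 0 ≤ ⟪p + γ • q, g - sM p⟫
  have h2 : 0 ≤ ⟪p, g - sM p⟫ + γ * ⟪q, g - sM p⟫ := by
    have h := (hsM _ hp').2 (hsM p hp).1
    simp only [Set.mem_setOf_eq] at h
    have h' : ⟪p + γ • q, g⟫ - ⟪p + γ • q, sM p⟫ ≥ 0 := by linarith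
    rw [← inner_sub_right, inner_add_left, real_inner_smul_left] at h'
    linarith
  -- combine
  have hkey : |⟪p, g - sM p⟫| ≤ |γ| * |⟪q, g - sM p⟫| := by
    rw [abs_of_nonpos h1]
    calc -⟪p, g - sM p⟫ ≤ γ * ⟪q, g - sM p⟫ := by linarith
      _ ≤ |γ * ⟪q, g - sM p⟫| := le_abs_self _
      _ = |γ| * |⟪q, g - sM p⟫| := abs_mul _ _
  have hval : ⟪p, γ⁻¹ • (g - sM p)⟫ = γ⁻¹ * ⟪p, g - sM p⟫ := real_inner_smul_right _ _ _
  rw [Real.norm_eq_abs, hval, abs_mul, abs_inv]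
  calc |γ|⁻¹ * |⟪p, g - sM p⟫| ≤ |γ|⁻¹ * (|γ| * |⟪q, g - sM p⟫|) := by
        exact mul_le_mul_of_nonneg_left hkey (by positivity)
    _ = |⟪q, g - sM p⟫| := by field_simp
    _ ≤ ‖q‖ * ‖g - sM p‖ := abs_real_inner_le_norm _ _
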